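/- Let t > 2 and let G = D_{4t} = ⟨a, b : a^{2t} = b² = 1, bab = a^{−1}⟩, with elements indexed by g_k = a^{k−1} for 1 ≤ k ≤ 2t and g_k = a^{k−2t−1}b for 2t+1 ≤ k ≤ 4t. Let ρ : G × G → {1,−1} be defined on indices by: ρ(g_i,g_j) = 1 iff i + j ≤ 2t+1, for i,j ≤ 2t; ρ(g_i,g_j) = 1 iff i + (j−2t) ≤ 2t+1, for i ≤ 2t < j; ρ(g_i,g_j) = 1 iff j ≤ i−2t, for j ≤ 2t < i; and ρ(g_i,g_j) = −1 iff j ≤ i, for i,j > 2t (so the matrix of ρ is the block matrix [[A,A],[B,−B]] with A_{i,j} = 1 iff i+j ≤ 2t+1 and B_{i,j} = 1 iff j ≤ i). Let S = {g_k : 2 ≤ k ≤ 4t−2} = G ∖ {1, a^{2t−2}b, a^{2t−1}b}. In ℚ[x_d : d ∈ S], let J be the ideal generated by x_d² − x_d for all d ∈ S together with, for each s ∈ {2, 3, …, t}, the polynomial Σ_{h∈G} ρ(g_s,h) · ∏_{d ∈ S ∩ {h, g_s·h}} (1 − 2x_d). Then a point a : S → ℚ lies in the affine variety V(J) if and only if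 a_d ∈ {0,1} for every d ∈ S and the cocyclic matrix of ψ(g,h) = ρ(g,h)·∏_{d∈S} ∂_d(g,h)^{a_d} is Hadamard. -/

import Mathlib

open Matrix MvPolynomial

/-- The characteristic map `δ_d`. -/
def charMap {G : Type*} [DecidableEq G] (d x : G) : ℤ := if x = d then -1 else 1

/-- The elementary coboundary `∂_d`. -/
def elemCob {G : Type*} [Group G] [DecidableEq G] (d g h : G) : ℤ :=
  charMap d g * charMap d h * charMap d (g * h)

/-- The ordering `g_k` of `D_{4t}`: `g_k = a^{k-1}` for `1 ≤ k ≤ 2t` and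
`g_k = a^{k-2t-1}·b` for `2t+1 ≤ k ≤ 4t`, where `a = r 1` and `b = sr 0`. -/
def dihEl (t k : ℕ) : DihedralGroup (2 * t) :=
  if k ≤ 2 * t then DihedralGroup.r ((k - 1 : ℕ) : ZMod (2 * t))
  else DihedralGroup.r ((k - 2 * t - 1 : ℕ) : ZMod (2 * t)) * DihedralGroup.sr 0

/-- The index `k ∈ {1,…,4t}` of a dihedral group element in the above ordering
(`a^m = r m` has index `m+1`; `a^m·b = sr (-m)` has index `2t+m+1`). -/
def dihIdx {t : ℕ} : DihedralGroup (2 * t) → ℕ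
  | DihedralGroup.r i => i.val + 1
  | DihedralGroup.sr j => 2 * t + (-j).val + 1

/-- The entries of the block matrix `[[A,A],[B,−B]]`, where `A_{i,j} = 1` iff
`i+j ≤ 2t+1` and `B_{i,j} = 1` iff `j ≤ i`, read through the indexing of `D_{4t}`. -/
def rhoIdxD (t i j : ℕ) : ℤ :=
  if i ≤ 2 * t then
    (if j ≤ 2 * t then (if i + j ≤ 2 * t + 1 then 1 else -1)
     else (if i + (j - 2 * t) ≤ 2 * t + 1 then 1 else -1))
  else
    (if j ≤ 2 * t then (if j ≤ i - 2 * t then 1 else -1)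
     else (if j ≤ i then -1 else 1))

/-- The fixed representative cocycle `ρ = β₂·β₃` over `D_{4t}`. -/
def rhoD (t : ℕ) (g h : DihedralGroup (2 * t)) : ℤ := rhoIdxD t (dihIdx g) (dihIdx h)

/-- The coboundary index set `S = G ∖ {1, a^{2t−2}b, a^{2t−1}b}`. -/
def SD (t : ℕ) [NeZero (2 * t)] : Finset (DihedralGroup (2 * t)) :=
  Finset.univ \ {(1 : DihedralGroup (2 * t)),
    DihedralGroup.r ((2 * t - 2 : ℕ) : ZMod (2 * t)) * DihedralGroup.sr 0,
    DihedralGroup.r ((2 * t - 1 : ℕ) : ZMod (2 * t)) * DihedralGroup.sr 0}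

/-- The row polynomial `Σ_{h∈G} ρ(g_s,h) · ∏_{d ∈ S ∩ {h, g_s·h}} (1 - 2x_d)`. -/
noncomputable def rowPolyD (t : ℕ) [NeZero (2 * t)] (s : ℕ) :
    MvPolynomial {d : DihedralGroup (2 * t) // d ∈ SD t} ℚ :=
  ∑ h : DihedralGroup (2 * t), MvPolynomial.C ((rhoD t (dihEl t s) h : ℤ) : ℚ) *
    ∏ d : {d : DihedralGroup (2 * t) // d ∈ SD t},
      if (d : DihedralGroup (2 * t)) = h ∨ (d : DihedralGroup (2 * t)) = dihEl t s * h then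
        (1 - 2 * MvPolynomial.X d) else 1

/-- The ideal `J_{D_{4t}}` of Theorem 5. -/
noncomputable def idealD (t : ℕ) [NeZero (2 * t)] :
    Ideal (MvPolynomial {d : DihedralGroup (2 * t) // d ∈ SD t} ℚ) :=
  Ideal.span
    ({p | ∃ d : {d : DihedralGroup (2 * t) // d ∈ SD t},
        p = MvPolynomial.X d ^ 2 - MvPolynomial.X d} ∪
     {p | ∃ s : ℕ, 2 ≤ s ∧ s ≤ t ∧ p = rowPolyD t s})

/-! ### Auxiliary lemmas -/

section ValAux
variable {n : ℕ} [NeZero n]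

lemma val_add_cases' (i j : ZMod n) :
    (i + j).val = i.val + j.val ∨ (i + j).val + n = i.val + j.val := by
  have h1 : (i + j).val = (i.val + j.val) % n := ZMod.val_add i j
  have h2 : i.val < n := ZMod.val_lt i
  have h3 : j.val < n := ZMod.val_lt j
  rcases Nat.lt_or_ge (i.val + j.val) n with h | h
  · left; rw [h1, Nat.mod_eq_of_lt h]
  · right; rw [h1, Nat.mod_eq_sub_mod h, Nat.mod_eq_of_lt (by omega)]; omega

lemma val_neg_cases' (i : ZMod n) :
    ((-i).val = 0 ∧ i.val = 0) ∨ (-i).val + i.val = n := by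
  have h := val_add_cases' (-i) i
  rw [neg_add_cancel] at h
  have h2 : (0 : ZMod n).val = 0 := ZMod.val_zero
  omega
end ValAux

namespace D4T

open DihedralGroup

variable {t : ℕ} [NeZero (2 * t)]

lemma rhoD_rr (i j : ZMod (2 * t)) :
    rhoD t (r i) (r j) = if i.val + j.val < 2 * t then 1 else -1 := by
  have h1 : i.val < 2 * t := ZMod.val_lt i
  have h2 : j.val < 2 * t := ZMod.val_lt j
  simp only [rhoD, dihIdx, rhoIdxD]
  split_ifs <;> omega

lemma rhoD_rs (i j : ZMod (2 * t)) :
    rhoD t (r i) (sr j) = if i.val + (-j).val < 2 * t then 1 else -1 := by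
  have h1 : i.val < 2 * t := ZMod.val_lt i
  have h2 : (-j).val < 2 * t := ZMod.val_lt (-j)
  simp only [rhoD, dihIdx, rhoIdxD]
  split_ifs <;> omega

lemma rhoD_sr (i j : ZMod (2 * t)) :
    rhoD t (sr i) (r j) = if j.val ≤ (-i).val then 1 else -1 := by
  have h1 : (-i).val < 2 * t := ZMod.val_lt (-i)
  have h2 : j.val < 2 * t := ZMod.val_lt j
  have ht : 0 < 2 * t := Nat.pos_of_ne_zero (NeZero.ne _)
  simp only [rhoD, dihIdx, rhoIdxD]
  split_ifs <;> omega

lemma rhoD_ss (i j : ZMod (2 * t)) :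
    rhoD t (sr i) (sr j) = if (-j).val ≤ (-i).val then -1 else 1 := by
  have h1 : (-i).val < 2 * t := ZMod.val_lt (-i)
  have h2 : (-j).val < 2 * t := ZMod.val_lt (-j)
  have ht : 0 < 2 * t := Nat.pos_of_ne_zero (NeZero.ne _)
  simp only [rhoD, dihIdx, rhoIdxD]
  split_ifs <;> omega

lemma rhoD_unit (g h : DihedralGroup (2 * t)) : rhoD t g h = 1 ∨ rhoD t g h = -1 := by
  cases g <;> cases h <;>
    simp only [rhoD_rr, rhoD_rs, rhoD_sr, rhoD_ss] <;> split_ifs <;> simp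

lemma rhoD_one_left (h : DihedralGroup (2 * t)) : rhoD t 1 h = 1 := by
  have h0 : (0 : ZMod (2 * t)).val = 0 := ZMod.val_zero
  rw [one_def]
  cases h with
  | r j => rw [rhoD_rr]; have := ZMod.val_lt j; simp only [h0]; omega
  | sr j => rw [rhoD_rs]; have := ZMod.val_lt (-j); simp only [h0]; omega

set_option maxHeartbeats 1000000 in
lemma rhoD_cocycle (g h k : DihedralGroup (2 * t)) :
    rhoD t g h * rhoD t (g * h) k = rhoD t h k * rhoD t g (h * k) := by
  obtain ⟨i⟩ | ⟨i⟩ := g <;> obtain ⟨j⟩ | ⟨j⟩ := h <;> obtain ⟨l⟩ | ⟨l⟩ := k <;>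
    simp only [r_mul_r, r_mul_sr, sr_mul_r, sr_mul_sr, rhoD_rr, rhoD_rs, rhoD_sr, rhoD_ss,
      sub_eq_add_neg, neg_add_rev, neg_neg] <;>
    have vi := ZMod.val_lt i <;> have vj := ZMod.val_lt j <;> have vl := ZMod.val_lt l <;>
    have ni := val_neg_cases' i <;> have nj := val_neg_cases' j <;> have nl := val_neg_cases' l
  case r.r.r =>
    have h1 := val_add_cases' i j; have h2 := val_add_cases' j l
    have v1 := ZMod.val_lt (i + j); have v2 := ZMod.val_lt (j + l)
    split_ifs <;> omega
  case r.r.sr =>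
    have h1 := val_add_cases' i j; have h2 := val_add_cases' j (-l)
    have v1 := ZMod.val_lt (i + j); have v2 := ZMod.val_lt (j + -l)
    have v3 := ZMod.val_lt (-l)
    split_ifs <;> omega
  case r.sr.r =>
    have h1 := val_add_cases' i (-j); have h2 := val_add_cases' (-l) (-j)
    have v1 := ZMod.val_lt (i + -j); have v2 := ZMod.val_lt (-l + -j)
    have v3 := ZMod.val_lt (-j); have v4 := ZMod.val_lt (-l)
    split_ifs <;> omega
  case r.sr.sr =>
    have h1 := val_add_cases' i (-j); have h2 := val_add_cases' l (-j)
    have v1 := ZMod.val_lt (i + -j); have v2 := ZMod.val_lt (l + -j)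
    have v3 := ZMod.val_lt (-j); have v4 := ZMod.val_lt (-l)
    split_ifs <;> omega
  case sr.r.r =>
    have h1 := val_add_cases' (-j) (-i); have h2 := val_add_cases' j l
    have v1 := ZMod.val_lt (-j + -i); have v2 := ZMod.val_lt (j + l)
    have v3 := ZMod.val_lt (-i); have v4 := ZMod.val_lt (-j)
    split_ifs <;> omega
  case sr.r.sr =>
    have h1 := val_add_cases' (-j) (-i); have h2 := val_add_cases' (-l) (-j)
    have h3 := val_add_cases' j (-l)
    have v1 := ZMod.val_lt (-j + -i); have v2 := ZMod.val_lt (-l + -j)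
    have v3 := ZMod.val_lt (-i); have v4 := ZMod.val_lt (-j); have v5 := ZMod.val_lt (-l)
    have v6 := ZMod.val_lt (j + -l)
    split_ifs <;> omega
  case sr.sr.r =>
    have h1 := val_add_cases' j (-i); have h2 := val_add_cases' j l
    have h3 := val_add_cases' (-l) (-j)
    have v1 := ZMod.val_lt (j + -i); have v2 := ZMod.val_lt (j + l)
    have v3 := ZMod.val_lt (-i); have v4 := ZMod.val_lt (-j); have v5 := ZMod.val_lt (-l)
    have v6 := ZMod.val_lt (-l + -j)
    split_ifs <;> omega
  case sr.sr.sr =>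
    have h1 := val_add_cases' j (-i); have h2 := val_add_cases' l (-j)
    have v1 := ZMod.val_lt (j + -i); have v2 := ZMod.val_lt (l + -j)
    have v3 := ZMod.val_lt (-i); have v4 := ZMod.val_lt (-j); have v5 := ZMod.val_lt (-l)
    split_ifs <;> omega

/-- Summation over the dihedral group splits into rotations and reflections. -/
lemma sum_dihedral {M : Type*} [AddCommMonoid M] (F : DihedralGroup (2 * t) → M) :
    ∑ g, F g = (∑ i : ZMod (2 * t), F (r i)) + ∑ i : ZMod (2 * t), F (sr i) := by
  classical
  let e : (ZMod (2 * t)) ⊕ (ZMod (2 * t)) ≃ DihedralGroup (2 * t) :=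
    { toFun := fun x => match x with | Sum.inl j => r j | Sum.inr j => sr j
      invFun := fun x => match x with | r j => Sum.inl j | sr j => Sum.inr j
      left_inv := by rintro (x | x) <;> rfl
      right_inv := by rintro (x | x) <;> rfl }
  rw [← Equiv.sum_comp e F, Fintype.sum_sum_type]
  rfl

variable (f : DihedralGroup (2 * t) → ℤ)

/-- The (un-normalized) row sum `T(g) = Σ_h ρ(g,h) f(h) f(gh)`. -/
def TD (g : DihedralGroup (2 * t)) : ℤ :=
  ∑ h, rhoD t g h * (f h * f (g * h))

/-- The cocycle `ψ = ρ·∂f`. -/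
def psiD (g h : DihedralGroup (2 * t)) : ℤ :=
  rhoD t g h * (f g * f h * f (g * h))

variable {f}

lemma rho_ss_shift (i j : ZMod (2 * t)) :
    rhoD t (sr i) (sr (i + j)) = - rhoD t (sr i) (r j) := by
  rw [rhoD_ss, rhoD_sr]
  have e : -(i + j) = -i + -j := neg_add i j
  rw [e]
  have h1 := val_add_cases' (-i) (-j)
  have h2 := val_neg_cases' i; have h3 := val_neg_cases' j
  have v1 := ZMod.val_lt (-i + -j); have v2 := ZMod.val_lt (-i)
  have v3 := ZMod.val_lt (-j); have v4 := ZMod.val_lt j; have v5 := ZMod.val_lt i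
  split_ifs <;> omega

lemma rho_rr_neg {m : ZMod (2 * t)} (hm : m.val ≠ 0) (j : ZMod (2 * t)) :
    rhoD t (r (-m)) (r (m + j)) = - rhoD t (r m) (r j) := by
  rw [rhoD_rr, rhoD_rr]
  have h1 := val_add_cases' m j
  have h2 := val_neg_cases' m
  have v1 := ZMod.val_lt (m + j); have v2 := ZMod.val_lt (-m)
  have v3 := ZMod.val_lt m; have v4 := ZMod.val_lt j
  split_ifs <;> omega

lemma rho_rs_neg {m : ZMod (2 * t)} (hm : m.val ≠ 0) (j : ZMod (2 * t)) :
    rhoD t (r (-m)) (sr (j - m)) = - rhoD t (r m) (sr j) := by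
  rw [rhoD_rs, rhoD_rs]
  have e : -(j - m) = m + -j := by ring
  rw [e]
  have h1 := val_add_cases' m (-j)
  have h2 := val_neg_cases' m; have h3 := val_neg_cases' j
  have v1 := ZMod.val_lt (m + -j); have v2 := ZMod.val_lt (-m)
  have v3 := ZMod.val_lt m; have v4 := ZMod.val_lt (-j); have v5 := ZMod.val_lt j
  split_ifs <;> omega

lemma TD_sr (i : ZMod (2 * t)) : TD f (sr i) = 0 := by
  rw [TD, sum_dihedral]
  simp only [sr_mul_r, sr_mul_sr]
  have h2 : ∑ j : ZMod (2 * t), rhoD t (sr i) (sr (i + j)) * (f (sr (i + j)) * f (r j))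
      = ∑ j : ZMod (2 * t), rhoD t (sr i) (sr j) * (f (sr j) * f (r (j - i))) := by
    refine Fintype.sum_equiv (Equiv.addLeft i) _ _ fun j => ?_
    have e : i + j - i = j := by ring
    simp only [Equiv.coe_addLeft, e]
  rw [← h2, ← Finset.sum_add_distrib]
  apply Finset.sum_eq_zero; intro j _
  rw [rho_ss_shift]; ring

lemma TD_neg {m : ZMod (2 * t)} (hm : m ≠ 0) : TD f (r m) + TD f (r (-m)) = 0 := by
  have hmv : m.val ≠ 0 := fun h => hm ((ZMod.val_eq_zero m).mp h)
  rw [TD, TD, sum_dihedral, sum_dihedral]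
  simp only [r_mul_r, r_mul_sr, sub_neg_eq_add]
  have h1 : ∑ j : ZMod (2 * t), rhoD t (r (-m)) (r (m + j)) * (f (r (m + j)) * f (r j))
      = ∑ j : ZMod (2 * t), rhoD t (r (-m)) (r j) * (f (r j) * f (r (-m + j))) := by
    refine Fintype.sum_equiv (Equiv.addLeft m) _ _ fun j => ?_
    have e : -m + (m + j) = j := by ring
    simp only [Equiv.coe_addLeft, e]
  have h2 : ∑ j : ZMod (2 * t), rhoD t (r (-m)) (sr (j - m)) * (f (sr (j - m)) * f (sr j))
      = ∑ j : ZMod (2 * t), rhoD t (r (-m)) (sr j) * (f (sr j) * f (sr (j + m))) := by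
    refine Fintype.sum_equiv (Equiv.subRight m) _ _ fun j => ?_
    have e : j - m + m = j := by ring
    simp only [Equiv.subRight_apply, e]
  rw [← h1, ← h2]
  have zA : (∑ j : ZMod (2 * t), rhoD t (r m) (r j) * (f (r j) * f (r (m + j))))
      + (∑ j : ZMod (2 * t), rhoD t (r (-m)) (r (m + j)) * (f (r (m + j)) * f (r j))) = 0 := by
    rw [← Finset.sum_add_distrib]
    apply Finset.sum_eq_zero; intro j _
    rw [rho_rr_neg hmv]; ring
  have zB : (∑ j : ZMod (2 * t), rhoD t (r m) (sr j) * (f (sr j) * f (sr (j - m))))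
      + (∑ j : ZMod (2 * t), rhoD t (r (-m)) (sr (j - m)) * (f (sr (j - m)) * f (sr j))) = 0 := by
    rw [← Finset.sum_add_distrib]
    apply Finset.sum_eq_zero; intro j _
    rw [rho_rs_neg hmv]; ring
  linarith

lemma TD_all (hrows : ∀ m : ZMod (2 * t), 1 ≤ m.val → m.val < t → TD f (r m) = 0)
    (g : DihedralGroup (2 * t)) (hg : g ≠ 1) : TD f g = 0 := by
  obtain ⟨m⟩ | ⟨i⟩ := g
  · have hm : m ≠ 0 := by
      intro h; exact hg (by rw [h, one_def])
    have hmv : m.val ≠ 0 := fun h => hm ((ZMod.val_eq_zero m).mp h)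
    have hlt := ZMod.val_lt m
    rcases Nat.lt_or_ge m.val t with h1 | h1
    · exact hrows m (by omega) h1
    rcases Nat.eq_or_lt_of_le h1 with h2 | h2
    · -- m.val = t, so -m = m
      have hneg := val_neg_cases' m
      have : (-m).val = m.val := by omega
      have hmm : -m = m := ZMod.val_injective _ this
      have := TD_neg (f := f) hm
      rw [hmm] at this
      linarith
    · -- t < m.val, use the pair
      have hneg := val_neg_cases' m
      have hmv' : 1 ≤ (-m).val ∧ (-m).val < t := by omega
      have h0 := hrows (-m) hmv'.1 hmv'.2
      have := TD_neg (f := f) hm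
      linarith
  · exact TD_sr i

variable (hf : ∀ x, f x = 1 ∨ f x = -1)
include hf

lemma psiD_sq (g h : DihedralGroup (2 * t)) : psiD f g h * psiD f g h = 1 := by
  rcases rhoD_unit (t := t) g h with h1 | h1 <;> rcases hf g with h2 | h2 <;>
    rcases hf h with h3 | h3 <;> rcases hf (g * h) with h4 | h4 <;>
    simp [psiD, h1, h2, h3, h4]

lemma psiD_cocycle (g h k : DihedralGroup (2 * t)) :
    psiD f g h * psiD f (g * h) k = psiD f h k * psiD f g (h * k) := by
  have hr := rhoD_cocycle g h k
  have s1 : f (g * h) * f (g * h) = 1 := by rcases hf (g * h) with h1 | h1 <;> rw [h1] <;> ring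
  have s2 : f (h * k) * f (h * k) = 1 := by rcases hf (h * k) with h1 | h1 <;> rw [h1] <;> ring
  simp only [psiD, ← mul_assoc g h k]
  linear_combination (f g * f h * f k * f (g*h*k)) * hr +
    (rhoD t g h * rhoD t (g*h) k * f g * f h * f k * f (g*h*k)) * s1 -
    (rhoD t h k * rhoD t g (h*k) * f g * f h * f k * f (g*h*k)) * s2

omit hf in
lemma sum_psiD (g : DihedralGroup (2 * t)) : ∑ h, psiD f g h = f g * TD f g := by
  rw [TD, Finset.mul_sum]
  exact Finset.sum_congr rfl fun h _ => by rw [psiD]; ring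

omit hf in
lemma psiD_one_left (h : DihedralGroup (2 * t)) (hfh : f h = 1 ∨ f h = -1) :
    psiD f 1 h = f 1 := by
  have sq : f h * f h = 1 := by rcases hfh with h1 | h1 <;> rw [h1] <;> ring
  rw [psiD, rhoD_one_left, one_mul, one_mul]
  linear_combination f 1 * sq

lemma psiD_row_orth (g g' : DihedralGroup (2 * t)) :
    ∑ h, psiD f g h * psiD f g' h
      = psiD f (g * g'⁻¹) g' * (f (g * g'⁻¹) * TD f (g * g'⁻¹)) := by
  set q := g * g'⁻¹ with hqdef
  have hq : q * g' = g := inv_mul_cancel_right g g'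
  have key : ∀ h, psiD f g h * psiD f g' h = psiD f q g' * psiD f q (g' * h) := by
    intro h
    have hc := psiD_cocycle hf q g' h
    rw [hq] at hc
    have u1 := psiD_sq hf q g'
    have u2 := psiD_sq hf g' h
    linear_combination (psiD f q g' * psiD f g' h) * hc -
      (psiD f g h * psiD f g' h) * u1 + (psiD f q g' * psiD f q (g' * h)) * u2
  calc ∑ h, psiD f g h * psiD f g' h = ∑ h, psiD f q g' * psiD f q (g' * h) :=
        Finset.sum_congr rfl fun h _ => key h
    _ = psiD f q g' * ∑ h, psiD f q (g' * h) := by rw [Finset.mul_sum]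
    _ = psiD f q g' * ∑ h, psiD f q h := by
        congr 1
        refine Fintype.sum_equiv (Equiv.mulLeft g') _ _ fun h => ?_
        simp [Equiv.coe_mulLeft]
    _ = _ := by rw [sum_psiD]

lemma psiD_diag (g : DihedralGroup (2 * t)) :
    ∑ h, psiD f g h * psiD f g h = (4 * t : ℤ) := by
  have : ∀ h : DihedralGroup (2 * t), psiD f g h * psiD f g h = 1 := psiD_sq hf g
  rw [Finset.sum_congr rfl fun h _ => this h]
  rw [Finset.sum_const, Finset.card_univ, DihedralGroup.card]
  ring

lemma hadamard_iff_rows :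
    (Matrix.of (psiD f) * (Matrix.of (psiD f))ᵀ
        = (4 * t : ℤ) • (1 : Matrix (DihedralGroup (2 * t)) (DihedralGroup (2 * t)) ℤ))
      ↔ ∀ g, g ≠ 1 → TD f g = 0 := by
  constructor
  · intro hM g hg
    have h1 : (Matrix.of (psiD f) * (Matrix.of (psiD f))ᵀ) g 1 = 0 := by
      rw [hM]; simp [Matrix.smul_apply, Matrix.one_apply, hg]
    rw [Matrix.mul_apply] at h1
    simp only [Matrix.transpose_apply, Matrix.of_apply] at h1
    have e : ∀ h : DihedralGroup (2 * t), psiD f g h * psiD f 1 h = f 1 * psiD f g h := by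
      intro h; rw [psiD_one_left h (hf h)]; ring
    rw [Finset.sum_congr rfl fun h _ => e h, ← Finset.mul_sum, sum_psiD] at h1
    rcases hf 1 with e1 | e1 <;> rcases hf g with e2 | e2 <;>
      rw [e1, e2] at h1 <;> linarith
  · intro hrows
    ext g g'
    rw [Matrix.mul_apply]
    simp only [Matrix.transpose_apply, Matrix.of_apply, Matrix.smul_apply, Matrix.one_apply,
      smul_eq_mul]
    by_cases hgg : g = g'
    · subst hgg
      rw [psiD_diag hf]; simp
    · have hq1 : g * g'⁻¹ ≠ 1 := by
        intro h; exact hgg (mul_inv_eq_one.mp h)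
      rw [psiD_row_orth hf, hrows _ hq1]
      simp [hgg]

end D4T

/-! ### The coboundary data attached to a point of the variety -/

section Point

open DihedralGroup D4T

variable {t : ℕ} [NeZero (2 * t)] (a : {d : DihedralGroup (2 * t) // d ∈ SD t} → ℚ)

/-- The function `f : G → {±1}` determined by a `{0,1}`-point `a`. -/
def FaD (x : DihedralGroup (2 * t)) : ℤ :=
  ∏ d : {d : DihedralGroup (2 * t) // d ∈ SD t},
    (if a d = 1 then charMap (d : DihedralGroup (2 * t)) x else 1)

lemma FaD_unit (x : DihedralGroup (2 * t)) : FaD a x = 1 ∨ FaD a x = -1 := by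
  refine Finset.prod_induction _ (fun z => z = 1 ∨ z = -1)
    (fun u v hu hv => by rcases hu with h | h <;> rcases hv with h' | h' <;> simp [h, h'])
    (Or.inl rfl) (fun d _ => ?_)
  rcases eq_or_ne (a d) 1 with h | h
  · rw [if_pos h, charMap]; split_ifs <;> simp
  · rw [if_neg h]; left; rfl

lemma entry_eq (g h : DihedralGroup (2 * t)) :
    rhoD t g h * ∏ d : {d : DihedralGroup (2 * t) // d ∈ SD t},
        (if a d = 1 then elemCob (d : DihedralGroup (2 * t)) g h else 1)
      = psiD (FaD a) g h := by
  have key : ∀ d : {d : DihedralGroup (2 * t) // d ∈ SD t},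
      (if a d = 1 then elemCob (d : DihedralGroup (2 * t)) g h else 1)
        = (if a d = 1 then charMap (d : DihedralGroup (2 * t)) g else 1) *
          ((if a d = 1 then charMap (d : DihedralGroup (2 * t)) h else 1) *
           (if a d = 1 then charMap (d : DihedralGroup (2 * t)) (g * h) else 1)) := by
    intro d; rw [elemCob]; split_ifs <;> ring
  rw [Finset.prod_congr rfl fun d _ => key d, Finset.prod_mul_distrib, Finset.prod_mul_distrib]
  rw [psiD, FaD, FaD, FaD]
  ring

lemma prod_point_eq (ha : ∀ d, a d = 0 ∨ a d = 1) (x : DihedralGroup (2 * t)) :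
    (∏ d : {d : DihedralGroup (2 * t) // d ∈ SD t},
        if (d : DihedralGroup (2 * t)) = x then (1 - 2 * a d) else 1)
      = ((FaD a x : ℤ) : ℚ) := by
  rw [FaD, Int.cast_prod]
  refine Finset.prod_congr rfl fun d _ => ?_
  rcases ha d with h0 | h1
  · rw [if_neg (show ¬ a d = 1 by rw [h0]; norm_num)]
    by_cases hc : (d : DihedralGroup (2 * t)) = x
    · rw [if_pos hc, h0]; norm_num
    · rw [if_neg hc]; norm_num
  · rw [if_pos h1, charMap]
    by_cases hc : (d : DihedralGroup (2 * t)) = x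
    · rw [if_pos hc, if_pos hc.symm, h1]; norm_num
    · rw [if_neg hc, if_neg (fun h => hc h.symm)]; norm_num

lemma eval_rowPolyD (ha : ∀ d, a d = 0 ∨ a d = 1) {s : ℕ} (hs : dihEl t s ≠ 1) :
    MvPolynomial.eval a (rowPolyD t s) = ((TD (FaD a) (dihEl t s) : ℤ) : ℚ) := by
  rw [rowPolyD, map_sum, TD, Int.cast_sum]
  refine Finset.sum_congr rfl fun h _ => ?_
  rw [_root_.map_mul, eval_C]
  have hprod : (MvPolynomial.eval a) (∏ d : {d : DihedralGroup (2 * t) // d ∈ SD t},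
      if (d : DihedralGroup (2 * t)) = h ∨ (d : DihedralGroup (2 * t)) = dihEl t s * h then
        (1 - 2 * MvPolynomial.X d) else 1)
      = ∏ d : {d : DihedralGroup (2 * t) // d ∈ SD t},
          (MvPolynomial.eval a) (if (d : DihedralGroup (2 * t)) = h ∨
            (d : DihedralGroup (2 * t)) = dihEl t s * h then
              (1 - 2 * MvPolynomial.X d) else 1) := by
    exact map_prod _ _ _
  rw [hprod]
  have hne : h ≠ dihEl t s * h := fun he => hs (right_eq_mul.mp he)
  have split1 : ∀ d : {d : DihedralGroup (2 * t) // d ∈ SD t},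
      (MvPolynomial.eval a) (if (d : DihedralGroup (2 * t)) = h ∨
          (d : DihedralGroup (2 * t)) = dihEl t s * h then
            (1 - 2 * MvPolynomial.X d) else 1)
        = (if (d : DihedralGroup (2 * t)) = h then (1 - 2 * a d) else 1) *
          (if (d : DihedralGroup (2 * t)) = dihEl t s * h then (1 - 2 * a d) else 1) := by
    intro d
    rw [apply_ite (MvPolynomial.eval a)]
    have e1 : (MvPolynomial.eval a) (1 - 2 * MvPolynomial.X d) = 1 - 2 * a d := by simp
    have e0 : (MvPolynomial.eval a) (1 : MvPolynomial _ ℚ) = 1 := map_one _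
    by_cases c1 : (d : DihedralGroup (2 * t)) = h <;>
      by_cases c2 : (d : DihedralGroup (2 * t)) = dihEl t s * h
    · exact absurd (c1.symm.trans c2) hne
    · rw [if_pos (Or.inl c1), if_pos c1, if_neg c2, e1, mul_one]
    · rw [if_pos (Or.inr c2), if_neg c1, if_pos c2, e1, one_mul]
    · rw [if_neg (by tauto), if_neg c1, if_neg c2, e0, mul_one]
  rw [Finset.prod_congr rfl fun d _ => split1 d, Finset.prod_mul_distrib,
    prod_point_eq a ha, prod_point_eq a ha]
  push_cast; ring

lemma dihEl_ne_one {s : ℕ} (h2 : 2 ≤ s) (hst : s ≤ t) : dihEl t s ≠ 1 := by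
  have hle : s ≤ 2 * t := by omega
  rw [dihEl, if_pos hle, DihedralGroup.one_def]
  intro h
  have hval : ((s - 1 : ℕ) : ZMod (2 * t)).val = s - 1 := ZMod.val_cast_of_lt (by omega)
  have hz : ((s - 1 : ℕ) : ZMod (2 * t)) = 0 := by
    exact DihedralGroup.r.inj h
  rw [hz, ZMod.val_zero] at hval
  omega

end Point


/-- a point lies in `V(J_{D_{4t}})` iff it is a `{0,1}`-tuple whose
associated cocyclic matrix over `D_{4t}` is Hadamard. -/
theorem mem_variety_idealD_iff (t : ℕ) [NeZero (2 * t)] (ht : 2 < t)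
    (a : {d : DihedralGroup (2 * t) // d ∈ SD t} → ℚ) :
    (∀ p ∈ idealD t, eval a p = 0) ↔
      (∀ d, a d = 0 ∨ a d = 1) ∧
      (Matrix.of fun g h : DihedralGroup (2 * t) =>
            rhoD t g h *
              ∏ d : {d : DihedralGroup (2 * t) // d ∈ SD t},
                (if a d = 1 then elemCob (d : DihedralGroup (2 * t)) g h else 1)) *
          (Matrix.of fun g h : DihedralGroup (2 * t) =>
            rhoD t g h *
              ∏ d : {d : DihedralGroup (2 * t) // d ∈ SD t},
                (if a d = 1 then elemCob (d : DihedralGroup (2 * t)) g h else 1))ᵀ =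
        (4 * t : ℤ) • (1 : Matrix (DihedralGroup (2 * t)) (DihedralGroup (2 * t)) ℤ) := by
  classical
  have hMeq : (Matrix.of fun g h : DihedralGroup (2 * t) =>
        rhoD t g h * ∏ d : {d : DihedralGroup (2 * t) // d ∈ SD t},
          (if a d = 1 then elemCob (d : DihedralGroup (2 * t)) g h else 1))
      = Matrix.of (D4T.psiD (FaD a)) := by
    ext g h
    simp only [Matrix.of_apply]
    exact entry_eq a g h
  rw [hMeq, D4T.hadamard_iff_rows (FaD_unit a)]
  constructor
  · intro hJ
    have ha : ∀ d, a d = 0 ∨ a d = 1 := by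
      intro d
      have h0 := hJ _ (Ideal.subset_span (Set.mem_union_left _ ⟨d, rfl⟩))
      have h1 : a d ^ 2 - a d = 0 := by simpa using h0
      have h2 : a d * (a d - 1) = 0 := by linear_combination h1
      rcases mul_eq_zero.mp h2 with h | h
      · exact Or.inl h
      · exact Or.inr (by linarith)
    refine ⟨ha, ?_⟩
    intro g hg
    refine D4T.TD_all ?_ g hg
    intro m h1m hmt
    have hs1 : 2 ≤ m.val + 1 := by omega
    have hs2 : m.val + 1 ≤ t := by omega
    have h0 := hJ _ (Ideal.subset_span (Set.mem_union_right _ ⟨m.val + 1, hs1, hs2, rfl⟩))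
    have hne1 : dihEl t (m.val + 1) ≠ 1 := dihEl_ne_one hs1 hs2
    rw [eval_rowPolyD a ha hne1] at h0
    have hTD : D4T.TD (FaD a) (dihEl t (m.val + 1)) = 0 := by exact_mod_cast h0
    have hel : dihEl t (m.val + 1) = DihedralGroup.r m := by
      rw [dihEl, if_pos (by omega)]
      congr 1
      simp only [Nat.add_sub_cancel]
      exact ZMod.natCast_rightInverse m
    rwa [hel] at hTD
  · rintro ⟨ha, hrows⟩ p hp
    have hle : idealD t ≤ RingHom.ker (MvPolynomial.eval a) := by
      rw [idealD]
      refine Ideal.span_le.mpr ?_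
      rintro q (⟨d, rfl⟩ | ⟨s, hs1, hs2, rfl⟩)
      · simp only [SetLike.mem_coe, RingHom.mem_ker, map_sub, map_pow, eval_X]
        rcases ha d with h | h <;> rw [h] <;> norm_num
      · simp only [SetLike.mem_coe, RingHom.mem_ker]
        rw [eval_rowPolyD a ha (dihEl_ne_one hs1 hs2),
          hrows _ (dihEl_ne_one hs1 hs2)]
        norm_num
    exact RingHom.mem_ker.mp (hle hp)
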